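/- If two testers A and B share the same pure normalization state ρ = |ψ⟩⟨ψ|, then their robustness of incompatibility equals the robustness of incompatibility of their canonical POVMs: R_T(A,B) = R_M(P,Q). In particular, A_j = a_j ⊗ |ψ⟩⟨ψ| and B_k = b_k ⊗ |ψ⟩⟨ψ| for POVMs {a_j}, {b_k} on H_1, and P ≅ {a_j}, Q ≅ {b_k}. -/

import Mathlib

open Matrix Finset
open scoped Kronecker ComplexOrder

noncomputable section

variable {n m : Type*} [Fintype n] [DecidableEq n] [Fintype m] [DecidableEq m]

/-- A density operator: positive semidefinite with unit trace. -/
def IsDensity (ρ : Matrix n n ℂ) : Prop := ρ.PosSemidef ∧ ρ.trace = 1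

/-- A quantum tester on `H₁ ⊗ H₀` with normalization state `ρ` on `H₀`:
a family of positive semidefinite operators summing to `I₁ ⊗ ρ`. -/
def IsTester {S : Type*} [Fintype S] (T : S → Matrix (m × n) (m × n) ℂ)
    (ρ : Matrix n n ℂ) : Prop :=
  IsDensity ρ ∧ (∀ j, (T j).PosSemidef) ∧
    ∑ j, T j = (1 : Matrix m m ℂ) ⊗ₖ ρ

/-- Two testers are compatible if a joint tester with the correct marginals exists. -/
def TesterCompatible {S S' : Type*} [Fintype S] [Fintype S']
    (A : S → Matrix (m × n) (m × n) ℂ) (B : S' → Matrix (m × n) (m × n) ℂ) : Prop :=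
  ∃ (C : S × S' → Matrix (m × n) (m × n) ℂ) (τ : Matrix n n ℂ),
    IsTester C τ ∧ (∀ j, ∑ k, C (j, k) = A j) ∧ (∀ k, ∑ j, C (j, k) = B k)

/-- λ-compatibility of testers: noisy mixtures become compatible. -/
def TesterLambdaCompatible {S S' : Type*} [Fintype S] [Fintype S']
    (A : S → Matrix (m × n) (m × n) ℂ) (B : S' → Matrix (m × n) (m × n) ℂ)
    (lam : ℝ) : Prop :=
  ∃ (NA : S → Matrix (m × n) (m × n) ℂ) (NB : S' → Matrix (m × n) (m × n) ℂ)
    (ρ' σ' : Matrix n n ℂ), IsTester NA ρ' ∧ IsTester NB σ' ∧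
    TesterCompatible (fun j => (1 - lam) • A j + lam • NA j)
      (fun k => (1 - lam) • B k + lam • NB k)

/-- The robustness of incompatibility of two testers. -/
noncomputable def TesterRobustness {S S' : Type*} [Fintype S] [Fintype S']
    (A : S → Matrix (m × n) (m × n) ℂ) (B : S' → Matrix (m × n) (m × n) ℂ) : ℝ :=
  sInf {lam : ℝ | lam ∈ Set.Icc (0 : ℝ) 1 ∧ TesterLambdaCompatible A B lam}

/-- The robustness of state incompatibility. -/
noncomputable def StateRobustness (ρ σ : Matrix n n ℂ) : ℝ :=
  sInf {lam : ℝ | lam ∈ Set.Icc (0 : ℝ) 1 ∧ ∃ ρ' σ' : Matrix n n ℂ,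
    IsDensity ρ' ∧ IsDensity σ' ∧
    (1 - lam) • ρ + lam • ρ' = (1 - lam) • σ + lam • σ'}

/-- The trace norm of a matrix, as the sum of its singular values. -/
noncomputable def traceNorm (X : Matrix n n ℂ) : ℝ :=
  ∑ i, Real.sqrt ((Matrix.posSemidef_conjTranspose_mul_self X).1.eigenvalues i)

/-- Inverse of the square root of a Hermitian matrix, taken on its support. -/
noncomputable def invSqrt {ρ : Matrix n n ℂ} (hρ : ρ.IsHermitian) : Matrix n n ℂ :=
  (Matrix.IsHermitian.eigenvectorUnitary hρ : Matrix n n ℂ) *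
    Matrix.diagonal (fun i => if hρ.eigenvalues i = 0 then (0 : ℂ)
      else ((Real.sqrt (hρ.eigenvalues i))⁻¹ : ℝ)) *
    (Matrix.IsHermitian.eigenvectorUnitary hρ : Matrix n n ℂ)ᴴ

/-- Orthogonal projection onto the support of a Hermitian matrix. -/
noncomputable def suppProj {ρ : Matrix n n ℂ} (hρ : ρ.IsHermitian) : Matrix n n ℂ :=
  (Matrix.IsHermitian.eigenvectorUnitary hρ : Matrix n n ℂ) *
    Matrix.diagonal (fun i => if hρ.eigenvalues i = 0 then (0 : ℂ) else 1) *
    (Matrix.IsHermitian.eigenvectorUnitary hρ : Matrix n n ℂ)ᴴ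

/-- A POVM with unit `e`: positive semidefinite operators summing to `e`. -/
def IsPOVMOn {S : Type*} [Fintype S] (e : Matrix n n ℂ) (P : S → Matrix n n ℂ) : Prop :=
  (∀ j, (P j).PosSemidef) ∧ ∑ j, P j = e

/-- Compatibility of POVMs with unit `e`. -/
def POVMCompatibleOn {S S' : Type*} [Fintype S] [Fintype S'] (e : Matrix n n ℂ)
    (P : S → Matrix n n ℂ) (Q : S' → Matrix n n ℂ) : Prop :=
  ∃ R : S × S' → Matrix n n ℂ, IsPOVMOn e R ∧
    (∀ j, ∑ k, R (j, k) = P j) ∧ (∀ k, ∑ j, R (j, k) = Q k)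

/-- λ-compatibility of POVMs with unit `e`. -/
def POVMLambdaCompatibleOn {S S' : Type*} [Fintype S] [Fintype S'] (e : Matrix n n ℂ)
    (P : S → Matrix n n ℂ) (Q : S' → Matrix n n ℂ) (lam : ℝ) : Prop :=
  ∃ (JP : S → Matrix n n ℂ) (JQ : S' → Matrix n n ℂ),
    IsPOVMOn e JP ∧ IsPOVMOn e JQ ∧
    POVMCompatibleOn e (fun j => (1 - lam) • P j + lam • JP j)
      (fun k => (1 - lam) • Q k + lam • JQ k)

/-- The robustness of incompatibility of two POVMs with unit `e`. -/
noncomputable def POVMRobustnessOn {S S' : Type*} [Fintype S] [Fintype S'] (e : Matrix n n ℂ)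
    (P : S → Matrix n n ℂ) (Q : S' → Matrix n n ℂ) : ℝ :=
  sInf {lam : ℝ | lam ∈ Set.Icc (0 : ℝ) 1 ∧ POVMLambdaCompatibleOn e P Q lam}

/-- The canonical POVM associated with a tester with normalization state `ρ`. -/
noncomputable def canonicalPOVM {S : Type*} [Fintype S]
    (T : S → Matrix (m × n) (m × n) ℂ) {ρ : Matrix n n ℂ} (hρ : ρ.IsHermitian)
    (j : S) : Matrix (m × n) (m × n) ℂ :=
  ((1 : Matrix m m ℂ) ⊗ₖ invSqrt hρ) * T j * ((1 : Matrix m m ℂ) ⊗ₖ invSqrt hρ)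

end


section Stmt16Aux

open Matrix Finset
open scoped Kronecker ComplexOrder

set_option linter.unusedSectionVars false
set_option maxHeartbeats 1000000

variable {n m : Type*} [Fintype n] [DecidableEq n] [Fintype m] [DecidableEq m]

lemma real_smul_mat {a b : Type*} (r : ℝ) (M : Matrix a b ℂ) : r • M = (r:ℂ) • M := by
  ext i j; simp [Matrix.smul_apply, Complex.real_smul]

lemma cmul_nonneg {z w : ℂ} (hz : 0 ≤ z) (hw : 0 ≤ w) : 0 ≤ z * w := by
  rw [Complex.nonneg_iff] at *
  obtain ⟨hz1, hz2⟩ := hz; obtain ⟨hw1, hw2⟩ := hw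
  constructor
  · simp only [Complex.mul_re, ← hz2, ← hw2, mul_zero, sub_zero]
    exact mul_nonneg hz1 hw1
  · simp [Complex.mul_im, ← hz2, ← hw2]

variable {k : Type*} [Fintype k] [DecidableEq k]

lemma psd_of_proj {P : Matrix k k ℂ} (h1 : P.IsHermitian) (h2 : P * P = P) : P.PosSemidef := by
  have h : P = Pᴴ * P := by rw [h1.eq, h2]
  rw [h]; exact posSemidef_conjTranspose_mul_self P

lemma psd_smul {M : Matrix k k ℂ} (hM : M.PosSemidef) {c : ℂ} (hc : 0 ≤ c) :
    (c • M).PosSemidef := by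
  refine Matrix.PosSemidef.of_dotProduct_mulVec_nonneg ?_ ?_
  · have h : star c = c := by
      rw [Complex.star_def, Complex.conj_eq_iff_im]
      exact ((Complex.nonneg_iff).1 hc).2.symm
    unfold Matrix.IsHermitian
    rw [conjTranspose_smul, h, hM.1.eq]
  · intro x
    rw [smul_mulVec, dotProduct_smul, smul_eq_mul]
    exact cmul_nonneg hc (hM.dotProduct_mulVec_nonneg x)

lemma psd_conj {M P : Matrix k k ℂ} (hM : M.PosSemidef) (hP : P.IsHermitian) :
    (P * M * P).PosSemidef := by
  have h := hM.mul_mul_conjTranspose_same P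
  rwa [hP.eq] at h

lemma psd_sum {ι : Type*} (s : Finset ι) (f : ι → Matrix k k ℂ)
    (h : ∀ i ∈ s, (f i).PosSemidef) : (∑ i ∈ s, f i).PosSemidef :=
  Finset.sum_induction f _ (fun _ _ ha hb => ha.add hb) Matrix.PosSemidef.zero h

lemma psd_eq_zero {M : Matrix k k ℂ} (hM : M.PosSemidef) (hM' : (-M).PosSemidef) : M = 0 := by
  have h : ∀ x : k → ℂ, M *ᵥ x = 0 := by
    intro x
    rw [← hM.dotProduct_mulVec_zero_iff x]
    have h1 := hM.dotProduct_mulVec_nonneg x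
    have h2 := hM'.dotProduct_mulVec_nonneg x
    rw [neg_mulVec, dotProduct_neg, neg_nonneg] at h2
    exact le_antisymm h2 h1
  ext i j
  have := congrFun (h (Pi.single j 1)) i
  simpa [mulVec_single] using this

section PsdSqrtCompat

open scoped MatrixOrder

noncomputable def Matrix.PosSemidef.sqrt {X : Matrix k k ℂ} (_hX : X.PosSemidef) :
    Matrix k k ℂ := CFC.sqrt X

lemma Matrix.PosSemidef.posSemidef_sqrt {X : Matrix k k ℂ} (hX : X.PosSemidef) :
    hX.sqrt.PosSemidef :=
  Matrix.nonneg_iff_posSemidef.mp (CFC.sqrt_nonneg X)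

lemma Matrix.PosSemidef.sqrt_mul_self {X : Matrix k k ℂ} (hX : X.PosSemidef) :
    hX.sqrt * hX.sqrt = X :=
  CFC.sqrt_mul_sqrt_self X (Matrix.nonneg_iff_posSemidef.mpr hX)

end PsdSqrtCompat

lemma support_lemma {P X : Matrix k k ℂ} (hP : P.IsHermitian) (hP2 : P * P = P)
    (hX : X.PosSemidef) (hPX : (P - X).PosSemidef) : P * X * P = X := by
  set Q : Matrix k k ℂ := 1 - P with hQ
  have hQh : Q.IsHermitian := by
    unfold Matrix.IsHermitian
    rw [hQ, conjTranspose_sub, conjTranspose_one, hP.eq]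
  have hQP : Q * P = 0 := by rw [hQ, sub_mul, one_mul, hP2, sub_self]
  have hQXQ : Q * X * Q = (hX.sqrt * Q)ᴴ * (hX.sqrt * Q) := by
    rw [conjTranspose_mul, hX.posSemidef_sqrt.1.eq, hQh.eq]
    rw [show Q * hX.sqrt * (hX.sqrt * Q) = Q * (hX.sqrt * hX.sqrt) * Q by noncomm_ring,
      hX.sqrt_mul_self]
  have hneg : (-(Q * X * Q)).PosSemidef := by
    have h1 : (Qᴴ * (P - X) * Q).PosSemidef := hPX.conjTranspose_mul_mul_same Q
    have h : Qᴴ * (P - X) * Q = -(Q * X * Q) := by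
      rw [hQh.eq]
      have h2 : Q * (P - X) * Q = Q * P * Q - Q * X * Q := by noncomm_ring
      rw [h2, hQP, zero_mul, zero_sub]
    rwa [h] at h1
  have hpos : (Q * X * Q).PosSemidef := by
    rw [hQXQ]; exact posSemidef_conjTranspose_mul_self _
  have hzero : hX.sqrt * Q = 0 := by
    rw [← conjTranspose_mul_self_eq_zero (A := hX.sqrt * Q), ← hQXQ]
    exact psd_eq_zero hpos hneg
  have hXQ : X * Q = 0 := by
    rw [← hX.sqrt_mul_self, mul_assoc, hzero, mul_zero]
  have hXP : X * P = X := by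
    have h := hXQ
    rw [hQ, mul_sub, mul_one, sub_eq_zero] at h
    exact h.symm
  have hPX' : P * X = X := by
    have h : (X * P)ᴴ = Xᴴ := congrArg conjTranspose hXP
    rwa [conjTranspose_mul, hP.eq, hX.1.eq] at h
  rw [hPX', hXP]

lemma eigen_proj {ρ : Matrix k k ℂ} (hρ : ρ.IsHermitian) (h2 : ρ * ρ = ρ) (i : k) :
    hρ.eigenvalues i = 0 ∨ hρ.eigenvalues i = 1 := by
  set U : Matrix k k ℂ := (Matrix.IsHermitian.eigenvectorUnitary hρ : Matrix k k ℂ) with hU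
  have hts : U * star U = 1 := Unitary.coe_mul_star_self _
  have hdiag : star U * ρ * U = diagonal (RCLike.ofReal ∘ hρ.eigenvalues) := by
    have := hρ.conjStarAlgAut_star_eigenvectorUnitary
    simpa [Unitary.conjStarAlgAut_apply] using this
  have hD : (diagonal (RCLike.ofReal ∘ hρ.eigenvalues) : Matrix k k ℂ) *
      diagonal (RCLike.ofReal ∘ hρ.eigenvalues) = diagonal (RCLike.ofReal ∘ hρ.eigenvalues) := by
    rw [← hdiag]
    calc star U * ρ * U * (star U * ρ * U) = star U * (ρ * (U * star U) * ρ) * U := by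
          noncomm_ring
      _ = star U * ρ * U := by rw [hts, mul_one, h2]
  rw [diagonal_mul_diagonal] at hD
  have h3 : (hρ.eigenvalues i : ℂ) * (hρ.eigenvalues i : ℂ) = (hρ.eigenvalues i : ℂ) := by
    have := congrFun (congrFun hD i) i
    simpa [Matrix.diagonal_apply_eq, Function.comp] using this
  have h4 : hρ.eigenvalues i * hρ.eigenvalues i = hρ.eigenvalues i := by exact_mod_cast h3
  have h5 : hρ.eigenvalues i * (hρ.eigenvalues i - 1) = 0 := by ring_nf; linarith [h4]
  rcases mul_eq_zero.mp h5 with h | h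
  · left; exact h
  · right; linarith [sub_eq_zero.mp h]

lemma invSqrt_of_proj {ρ : Matrix k k ℂ} (hρ : ρ.IsHermitian) (h2 : ρ * ρ = ρ) :
    invSqrt hρ = ρ := by
  have key : (fun i => if hρ.eigenvalues i = 0 then (0 : ℂ)
      else ((Real.sqrt (hρ.eigenvalues i))⁻¹ : ℝ)) = RCLike.ofReal ∘ hρ.eigenvalues := by
    funext i
    rcases eigen_proj hρ h2 i with h | h <;> simp [h]
  rw [invSqrt, key, ← Matrix.star_eq_conjTranspose]
  conv_rhs => rw [hρ.spectral_theorem]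
  rfl

lemma suppProj_of_proj {ρ : Matrix k k ℂ} (hρ : ρ.IsHermitian) (h2 : ρ * ρ = ρ) :
    suppProj hρ = ρ := by
  have key : (fun i => if hρ.eigenvalues i = 0 then (0 : ℂ) else 1)
      = RCLike.ofReal ∘ hρ.eigenvalues := by
    funext i
    rcases eigen_proj hρ h2 i with h | h <;> simp [h]
  rw [suppProj, key, ← Matrix.star_eq_conjTranspose]
  conv_rhs => rw [hρ.spectral_theorem]
  rfl

-- facts about the pure state
lemma psi_norm {ψ : n → ℂ} (hψ : ∑ i, ‖ψ i‖ ^ 2 = 1) :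
    ∑ i, star (ψ i) * ψ i = 1 := by
  have h : ∀ i, star (ψ i) * ψ i = ((‖ψ i‖ ^ 2 : ℝ) : ℂ) := by
    intro i
    rw [Complex.star_def, mul_comm, Complex.mul_conj, Complex.normSq_eq_norm_sq]
  calc ∑ i, star (ψ i) * ψ i = ((∑ i, ‖ψ i‖ ^ 2 : ℝ) : ℂ) := by
        rw [Complex.ofReal_sum]; exact Finset.sum_congr rfl (fun i _ => h i)
    _ = 1 := by rw [hψ]; norm_num

lemma rho_herm {ψ : n → ℂ} : (vecMulVec ψ (star ψ)).IsHermitian := by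
  unfold Matrix.IsHermitian
  ext i j
  simp [vecMulVec_apply, conjTranspose_apply, mul_comm]

lemma rho_idem {ψ : n → ℂ} (hψ : ∑ i, ‖ψ i‖ ^ 2 = 1) :
    vecMulVec ψ (star ψ) * vecMulVec ψ (star ψ) = vecMulVec ψ (star ψ) := by
  ext i j
  simp only [mul_apply, vecMulVec_apply, Pi.star_apply]
  calc ∑ l, ψ i * star (ψ l) * (ψ l * star (ψ j))
      = (ψ i * star (ψ j)) * ∑ l, star (ψ l) * ψ l := by
        rw [Finset.mul_sum]; exact Finset.sum_congr rfl (fun l _ => by ring)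
    _ = ψ i * star (ψ j) := by rw [psi_norm hψ, mul_one]

lemma rho_trace {ψ : n → ℂ} (hψ : ∑ i, ‖ψ i‖ ^ 2 = 1) :
    (vecMulVec ψ (star ψ)).trace = 1 := by
  calc (vecMulVec ψ (star ψ)).trace = ∑ i, ψ i * star (ψ i) := by
        simp [Matrix.trace, Matrix.diag, vecMulVec_apply]
    _ = ∑ i, star (ψ i) * ψ i := Finset.sum_congr rfl (fun i _ => mul_comm _ _)
    _ = 1 := psi_norm hψ

lemma rho_density {ψ : n → ℂ} (hψ : ∑ i, ‖ψ i‖ ^ 2 = 1) :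
    IsDensity (vecMulVec ψ (star ψ)) :=
  ⟨psd_of_proj rho_herm (rho_idem hψ), rho_trace hψ⟩

lemma rho_mulVec_self {ψ : n → ℂ} (hψ : ∑ i, ‖ψ i‖ ^ 2 = 1) :
    vecMulVec ψ (star ψ) *ᵥ ψ = ψ := by
  ext i
  simp only [mulVec, dotProduct, vecMulVec_apply, Pi.star_apply]
  calc ∑ j, ψ i * star (ψ j) * ψ j = ψ i * ∑ j, star (ψ j) * ψ j := by
        rw [Finset.mul_sum]; exact Finset.sum_congr rfl (fun l _ => by ring)
    _ = ψ i := by rw [psi_norm hψ, mul_one]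

lemma rho_self {ψ : n → ℂ} (hψ : ∑ i, ‖ψ i‖ ^ 2 = 1) :
    star ψ ⬝ᵥ vecMulVec ψ (star ψ) *ᵥ ψ = 1 := by
  rw [rho_mulVec_self hψ]
  exact psi_norm hψ

lemma rho_conj {ψ : n → ℂ} (σ : Matrix n n ℂ) :
    vecMulVec ψ (star ψ) * σ * vecMulVec ψ (star ψ)
      = (star ψ ⬝ᵥ σ *ᵥ ψ) • vecMulVec ψ (star ψ) := by
  ext i j
  simp only [mul_apply, vecMulVec_apply, Pi.star_apply, Matrix.smul_apply, smul_eq_mul,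
    dotProduct, mulVec, Finset.mul_sum, Finset.sum_mul]
  rw [Finset.sum_comm]
  refine Finset.sum_congr rfl fun y _ => ?_
  refine Finset.sum_congr rfl fun x _ => ?_
  ring

lemma trace_nonneg_of_psd {M : Matrix k k ℂ} (hM : M.PosSemidef) : (0:ℂ) ≤ M.trace := by
  rw [Matrix.trace]
  apply Finset.sum_nonneg
  intro i _
  have h := hM.dotProduct_mulVec_nonneg (Pi.single i 1)
  simpa [dotProduct, mulVec, Pi.single_apply, Matrix.diag] using h

lemma c_nonneg {ψ : n → ℂ} {σ : Matrix n n ℂ} (hσ : σ.PosSemidef) :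
    0 ≤ star ψ ⬝ᵥ σ *ᵥ ψ := hσ.dotProduct_mulVec_nonneg ψ

lemma c_le_one {ψ : n → ℂ} (hψ : ∑ i, ‖ψ i‖ ^ 2 = 1)
    {σ : Matrix n n ℂ} (hσ : σ.PosSemidef) (hσt : σ.trace = 1) :
    star ψ ⬝ᵥ σ *ᵥ ψ ≤ 1 := by
  set ρ := vecMulVec ψ (star ψ) with hρdef
  have hc_tr : star ψ ⬝ᵥ σ *ᵥ ψ = (σ * ρ).trace := by
    simp only [Matrix.trace, Matrix.diag, mul_apply, hρdef, vecMulVec_apply, Pi.star_apply,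
      dotProduct, mulVec, Finset.mul_sum]
    refine Finset.sum_congr rfl fun i _ => Finset.sum_congr rfl fun j _ => by ring
  have hρh : ρ.IsHermitian := rho_herm
  have hρi : ρ * ρ = ρ := rho_idem hψ
  have h1ρ : ((1 : Matrix n n ℂ) - ρ).PosSemidef := by
    have hherm : ((1 : Matrix n n ℂ) - ρ).IsHermitian := by
      unfold Matrix.IsHermitian
      rw [conjTranspose_sub, conjTranspose_one, hρh.eq]
    have hid : ((1 : Matrix n n ℂ) - ρ) * ((1 : Matrix n n ℂ) - ρ) = 1 - ρ := by
      rw [sub_mul, mul_sub, mul_sub, one_mul, mul_one, one_mul, hρi]; abel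
    exact psd_of_proj hherm hid
  have key : (0 : ℂ) ≤ (σ * (1 - ρ)).trace := by
    have h : σ * (1 - ρ) = hσ.sqrt * (hσ.sqrt * (1 - ρ)) := by
      rw [← mul_assoc, hσ.sqrt_mul_self]
    rw [h, Matrix.trace_mul_comm]
    apply trace_nonneg_of_psd
    have h2 := h1ρ.mul_mul_conjTranspose_same hσ.sqrt
    rwa [hσ.posSemidef_sqrt.1.eq] at h2
  have heq : (σ * (1 - ρ)).trace = 1 - (σ * ρ).trace := by
    rw [mul_sub, mul_one, trace_sub, hσt]
  rw [hc_tr]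
  rw [heq, sub_nonneg] at key
  exact key

-- kronecker facts
lemma kron_inj [Nonempty m] {X Y : Matrix n n ℂ}
    (h : (1 : Matrix m m ℂ) ⊗ₖ X = (1 : Matrix m m ℂ) ⊗ₖ Y) : X = Y := by
  obtain ⟨i⟩ := ‹Nonempty m›
  ext p q
  have h2 := congrFun (congrFun h (i, p)) (i, q)
  simpa [kroneckerMap_apply, one_apply] using h2

/-- map embedding H₁ into H₁ ⊗ ψ -/
noncomputable def psiEmbed (ψ : n → ℂ) : Matrix (m × n) m ℂ :=
  Matrix.of fun xp y => if xp.1 = y then ψ xp.2 else 0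

lemma psiEmbed_mul_conjTranspose (ψ : n → ℂ) :
    (psiEmbed (m := m) ψ : Matrix (m × n) m ℂ) * (psiEmbed (m := m) ψ)ᴴ
      = (1 : Matrix m m ℂ) ⊗ₖ vecMulVec ψ (star ψ) := by
  ext ⟨x, p⟩ ⟨y, q⟩
  simp [mul_apply, psiEmbed, conjTranspose_apply, kroneckerMap_apply, one_apply,
    vecMulVec_apply, apply_ite (star : ℂ → ℂ), ite_mul, mul_ite, Finset.sum_ite_eq,
    eq_comm]

lemma conjTranspose_mul_psiEmbed (ψ : n → ℂ) (hψ : ∑ i, ‖ψ i‖ ^ 2 = 1) :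
    (psiEmbed (m := m) ψ : Matrix (m × n) m ℂ)ᴴ * (psiEmbed (m := m) ψ : Matrix (m × n) m ℂ)
      = (1 : Matrix m m ℂ) := by
  have hn := psi_norm hψ
  ext x y
  simp only [mul_apply, psiEmbed, conjTranspose_apply, Matrix.of_apply,
    apply_ite (star : ℂ → ℂ), star_zero, ite_mul, zero_mul, mul_ite, mul_zero,
    Fintype.sum_prod_type]
  by_cases hxy : x = y
  · subst hxy
    simp only [one_apply_eq]
    calc (∑ z, ∑ r, if z = x then (if z = x then star (ψ r) * ψ r else 0) else 0)
        = ∑ z, (if z = x then ∑ r, star (ψ r) * ψ r else 0) := by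
          refine Finset.sum_congr rfl fun z _ => ?_
          by_cases hz : z = x <;> simp [hz]
      _ = 1 := by
          simp only [Finset.sum_ite_eq', Finset.mem_univ, if_true]
          simpa using hn
  · rw [one_apply_ne hxy]
    refine Finset.sum_eq_zero fun z _ => Finset.sum_eq_zero fun r _ => ?_
    by_cases hz : z = x <;> by_cases hz' : z = y <;> simp_all

lemma kron_of_pure (ψ : n → ℂ) (a : Matrix m m ℂ) :
    a ⊗ₖ vecMulVec ψ (star ψ) = psiEmbed (m := m) ψ * a * (psiEmbed (m := m) ψ)ᴴ := by
  ext ⟨x, p⟩ ⟨y, q⟩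
  simp only [mul_apply, psiEmbed, conjTranspose_apply, Matrix.of_apply, kroneckerMap_apply,
    vecMulVec_apply, Pi.star_apply, apply_ite (star : ℂ → ℂ), star_zero, ite_mul, zero_mul,
    mul_ite, mul_zero, Finset.sum_ite_eq, Finset.mem_univ, if_true]
  ring

lemma conj_kron_eq (ψ : n → ℂ) (X : Matrix (m × n) (m × n) ℂ) :
    ((1 : Matrix m m ℂ) ⊗ₖ vecMulVec ψ (star ψ)) * X *
      ((1 : Matrix m m ℂ) ⊗ₖ vecMulVec ψ (star ψ))
    = ((psiEmbed (m := m) ψ)ᴴ * X * psiEmbed (m := m) ψ) ⊗ₖ vecMulVec ψ (star ψ) := by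
  rw [show ((1 : Matrix m m ℂ) ⊗ₖ vecMulVec ψ (star ψ))
      = psiEmbed (m := m) ψ * (psiEmbed (m := m) ψ)ᴴ from (psiEmbed_mul_conjTranspose ψ).symm,
    kron_of_pure]
  simp only [Matrix.mul_assoc]

lemma mat_empty_eq [IsEmpty m] (X Y : Matrix (m × n) (m × n) ℂ) : X = Y := by
  ext ⟨i, _⟩ _
  exact (IsEmpty.false i).elim

end Stmt16Aux

section Stmt16Main

open Matrix Finset
open scoped Kronecker ComplexOrder

set_option linter.unusedSectionVars false
set_option maxHeartbeats 1000000

variable {n m : Type*} [Fintype n] [DecidableEq n] [Fintype m] [DecidableEq m]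

lemma kronP_herm (ψ : n → ℂ) :
    ((1 : Matrix m m ℂ) ⊗ₖ vecMulVec ψ (star ψ)).IsHermitian := by
  rw [← psiEmbed_mul_conjTranspose]
  unfold Matrix.IsHermitian
  rw [conjTranspose_mul, conjTranspose_conjTranspose]

lemma kronP_idem (ψ : n → ℂ) (hψ : ∑ i, ‖ψ i‖ ^ 2 = 1) :
    ((1 : Matrix m m ℂ) ⊗ₖ vecMulVec ψ (star ψ)) *
      ((1 : Matrix m m ℂ) ⊗ₖ vecMulVec ψ (star ψ))
      = (1 : Matrix m m ℂ) ⊗ₖ vecMulVec ψ (star ψ) := by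
  rw [← Matrix.mul_kronecker_mul, one_mul, rho_idem hψ]

lemma tester_support {S : Type*} [Fintype S] {ψ : n → ℂ}
    (hψ : ∑ i, ‖ψ i‖ ^ 2 = 1)
    {A : S → Matrix (m × n) (m × n) ℂ} (hA : IsTester A (Matrix.vecMulVec ψ (star ψ)))
    (j : S) :
    ((1 : Matrix m m ℂ) ⊗ₖ vecMulVec ψ (star ψ)) * A j *
      ((1 : Matrix m m ℂ) ⊗ₖ vecMulVec ψ (star ψ)) = A j := by
  classical
  refine support_lemma (kronP_herm ψ) (kronP_idem ψ hψ) (hA.2.1 j) ?_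
  have hsub : (1 : Matrix m m ℂ) ⊗ₖ vecMulVec ψ (star ψ) - A j
      = ∑ j' ∈ Finset.univ.erase j, A j' := by
    rw [← hA.2.2, ← Finset.add_sum_erase _ _ (Finset.mem_univ j), add_sub_cancel_left]
  rw [hsub]
  exact psd_sum _ _ (fun i _ => hA.2.1 i)

lemma conj_smul_mix (P : Matrix (m × n) (m × n) ℂ) (X : Matrix (m × n) (m × n) ℂ) (r : ℝ) :
    P * (r • X) * P = r • (P * X * P) := by
  rw [real_smul_mat, real_smul_mat, Matrix.mul_smul, Matrix.smul_mul]

lemma lambda_iff {S S' : Type*} [Fintype S] [Fintype S']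
    (A : S → Matrix (m × n) (m × n) ℂ) (B : S' → Matrix (m × n) (m × n) ℂ)
    (ψ : n → ℂ) (hψ : ∑ i, ‖ψ i‖ ^ 2 = 1)
    (hA : IsTester A (Matrix.vecMulVec ψ (star ψ)))
    (hB : IsTester B (Matrix.vecMulVec ψ (star ψ)))
    (lam : ℝ) (h0 : 0 ≤ lam) :
    TesterLambdaCompatible A B lam ↔
      POVMLambdaCompatibleOn ((1 : Matrix m m ℂ) ⊗ₖ vecMulVec ψ (star ψ)) A B lam := by
  have hρh : (vecMulVec ψ (star ψ)).IsHermitian := rho_herm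
  have hρ2 := rho_idem hψ
  have hρd : IsDensity (vecMulVec ψ (star ψ)) := rho_density hψ
  set ρ : Matrix n n ℂ := vecMulVec ψ (star ψ) with hρdef
  set P : Matrix (m × n) (m × n) ℂ := (1 : Matrix m m ℂ) ⊗ₖ ρ with hPdef
  have hPh : P.IsHermitian := kronP_herm ψ
  have hP2 : P * P = P := kronP_idem ψ hψ
  have hPpsd : P.PosSemidef := psd_of_proj hPh hP2
  constructor
  · rintro ⟨NA, NB, ρ', σ', hNA, hNB, C, τ, hC, hCj, hCk⟩
    rcases isEmpty_or_nonempty m with hm | hm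
    · exact ⟨fun _ => 0, fun _ => 0,
        ⟨fun _ => .zero, mat_empty_eq _ _⟩, ⟨fun _ => .zero, mat_empty_eq _ _⟩,
        ⟨fun _ => 0, ⟨fun _ => .zero, mat_empty_eq _ _⟩,
          fun j => mat_empty_eq _ _, fun k => mat_empty_eq _ _⟩⟩
    have hPA : ∀ j, P * A j * P = A j := tester_support hψ hA
    have hPB : ∀ k, P * B k * P = B k := tester_support hψ hB
    have hPNP : ∀ (σ'' : Matrix n n ℂ), P * ((1 : Matrix m m ℂ) ⊗ₖ σ'') * P
        = (star ψ ⬝ᵥ σ'' *ᵥ ψ) • P := by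
      intro σ''
      rw [hPdef, ← Matrix.mul_kronecker_mul, ← Matrix.mul_kronecker_mul, one_mul, one_mul,
        hρdef, rho_conj, Matrix.kronecker_smul]
    -- marginal sums of the joint tester
    have hmarg1 : ∑ x : S × S', C x
        = (1 - lam) • P + lam • ((1 : Matrix m m ℂ) ⊗ₖ ρ') := by
      rw [Fintype.sum_prod_type]
      calc ∑ j, ∑ k, C (j, k) = ∑ j, ((1 - lam) • A j + lam • NA j) :=
            Finset.sum_congr rfl fun j _ => hCj j
        _ = (1 - lam) • (∑ j, A j) + lam • (∑ j, NA j) := by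
            rw [Finset.sum_add_distrib, Finset.smul_sum, Finset.smul_sum]
        _ = _ := by rw [hA.2.2, hNA.2.2]
    have hmarg2 : ∑ x : S × S', C x
        = (1 - lam) • P + lam • ((1 : Matrix m m ℂ) ⊗ₖ σ') := by
      rw [Fintype.sum_prod_type, Finset.sum_comm]
      calc ∑ k, ∑ j, C (j, k) = ∑ k, ((1 - lam) • B k + lam • NB k) :=
            Finset.sum_congr rfl fun k _ => hCk k
        _ = (1 - lam) • (∑ k, B k) + lam • (∑ k, NB k) := by
            rw [Finset.sum_add_distrib, Finset.smul_sum, Finset.smul_sum]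
        _ = _ := by rw [hB.2.2, hNB.2.2]
    have hss : lam • ρ' = lam • σ' := by
      have h := add_left_cancel (hmarg1.symm.trans hmarg2)
      rw [← Matrix.kronecker_smul, ← Matrix.kronecker_smul] at h
      exact kron_inj h
    set c : ℂ := star ψ ⬝ᵥ ρ' *ᵥ ψ with hcdef
    set c' : ℂ := star ψ ⬝ᵥ σ' *ᵥ ψ with hc'def
    have hlamc : (lam : ℂ) * (1 - c) = (lam : ℂ) * (1 - c') := by
      have h := congrArg (fun M : Matrix n n ℂ => star ψ ⬝ᵥ M *ᵥ ψ) hss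
      simp only [smul_mulVec, dotProduct_smul] at h
      have h2 : (lam : ℂ) * c = (lam : ℂ) * c' := by
        simpa [Complex.real_smul] using h
      rw [mul_sub, mul_sub, h2]
    have hc0 : 0 ≤ c := c_nonneg hNA.1.1
    have hc1 : c ≤ 1 := c_le_one hψ hNA.1.1 hNA.1.2
    have hc'0 : 0 ≤ c' := c_nonneg hNB.1.1
    have hc'1 : c' ≤ 1 := c_le_one hψ hNB.1.1 hNB.1.2
    -- the value of τ on ψ
    have htau : τ = (1 - lam) • ρ + lam • ρ' := by
      apply kron_inj (m := m)
      have h := hmarg1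
      rw [hC.2.2] at h
      rw [h, hPdef, ← Matrix.kronecker_smul, ← Matrix.kronecker_smul, ← Matrix.kronecker_add]
    have ht : star ψ ⬝ᵥ τ *ᵥ ψ = ((1 : ℂ) - lam) + lam * c := by
      rw [htau]
      simp only [add_mulVec, smul_mulVec, dotProduct_add, dotProduct_smul]
      rw [hρdef, rho_self hψ]
      simp only [Complex.real_smul, smul_eq_mul, mul_one]
      push_cast
      ring
    -- nonemptiness and cardinalities
    have hSne : Nonempty S := by
      rcases isEmpty_or_nonempty S with h | h
      · exfalso
        have h1 := hA.2.2
        rw [Finset.univ_eq_empty, Finset.sum_empty] at h1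
        have h2 := congrArg Matrix.trace h1
        rw [trace_zero, Matrix.trace_kronecker, trace_one, hρdef, rho_trace hψ, mul_one] at h2
        have h3 : Fintype.card m = 0 := by exact_mod_cast h2.symm
        exact absurd h3 Fintype.card_ne_zero
      · exact h
    have hS'ne : Nonempty S' := by
      rcases isEmpty_or_nonempty S' with h | h
      · exfalso
        have h1 := hB.2.2
        rw [Finset.univ_eq_empty, Finset.sum_empty] at h1
        have h2 := congrArg Matrix.trace h1
        rw [trace_zero, Matrix.trace_kronecker, trace_one, hρdef, rho_trace hψ, mul_one] at h2
        have h3 : Fintype.card m = 0 := by exact_mod_cast h2.symm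
        exact absurd h3 Fintype.card_ne_zero
      · exact h
    set κ : ℂ := (Fintype.card S : ℂ) with hκdef
    set κ' : ℂ := (Fintype.card S' : ℂ) with hκ'def
    have hκ : κ ≠ 0 := Nat.cast_ne_zero.mpr Fintype.card_ne_zero
    have hκ' : κ' ≠ 0 := Nat.cast_ne_zero.mpr Fintype.card_ne_zero
    have hκnn : (0 : ℂ) ≤ κ⁻¹ := by
      rw [hκdef, show ((Fintype.card S : ℂ))⁻¹ = Complex.ofReal ((Fintype.card S : ℝ))⁻¹ by
        push_cast; ring]
      exact Complex.zero_le_real.2 (inv_nonneg.mpr (Nat.cast_nonneg _))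
    have hκ'nn : (0 : ℂ) ≤ κ'⁻¹ := by
      rw [hκ'def, show ((Fintype.card S' : ℂ))⁻¹ = Complex.ofReal ((Fintype.card S' : ℝ))⁻¹ by
        push_cast; ring]
      exact Complex.zero_le_real.2 (inv_nonneg.mpr (Nat.cast_nonneg _))
    have hlamnn : (0 : ℂ) ≤ (lam : ℂ) := Complex.zero_le_real.2 h0
    -- the noise POVMs
    set JP : S → Matrix (m × n) (m × n) ℂ :=
      fun j => P * NA j * P + ((1 - c) * κ⁻¹) • P with hJPdef
    set JQ : S' → Matrix (m × n) (m × n) ℂ :=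
      fun k => P * NB k * P + ((1 - c') * κ'⁻¹) • P with hJQdef
    set R : S × S' → Matrix (m × n) (m × n) ℂ :=
      fun x => P * C x * P + ((lam : ℂ) * (1 - c) * (κ * κ')⁻¹) • P with hRdef
    have hcoefJP : (0 : ℂ) ≤ (1 - c) * κ⁻¹ := cmul_nonneg (by simpa using sub_nonneg.2 hc1) hκnn
    have hcoefJQ : (0 : ℂ) ≤ (1 - c') * κ'⁻¹ :=
      cmul_nonneg (by simpa using sub_nonneg.2 hc'1) hκ'nn
    have hcoefR : (0 : ℂ) ≤ (lam : ℂ) * (1 - c) * (κ * κ')⁻¹ := by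
      refine cmul_nonneg (cmul_nonneg hlamnn (by simpa using sub_nonneg.2 hc1)) ?_
      rw [mul_inv]
      exact cmul_nonneg hκnn hκ'nn
    have hJPpsd : ∀ j, (JP j).PosSemidef :=
      fun j => (psd_conj (hNA.2.1 j) hPh).add (psd_smul hPpsd hcoefJP)
    have hJQpsd : ∀ k, (JQ k).PosSemidef :=
      fun k => (psd_conj (hNB.2.1 k) hPh).add (psd_smul hPpsd hcoefJQ)
    have hRpsd : ∀ x, (R x).PosSemidef :=
      fun x => (psd_conj (hC.2.1 x) hPh).add (psd_smul hPpsd hcoefR)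
    have hNAP : ∑ j, P * NA j * P = c • P := by
      rw [← Finset.sum_mul, ← Matrix.mul_sum, hNA.2.2, hPNP]
    have hNBP : ∑ k, P * NB k * P = c' • P := by
      rw [← Finset.sum_mul, ← Matrix.mul_sum, hNB.2.2, hPNP]
    have hJPsum : ∑ j, JP j = P := by
      rw [hJPdef]
      rw [Finset.sum_add_distrib, hNAP, Finset.sum_const, Finset.card_univ,
        ← Nat.cast_smul_eq_nsmul ℂ, smul_smul, ← hκdef,
        show κ * ((1 - c) * κ⁻¹) = 1 - c from by field_simp,
        ← add_smul, show c + (1 - c) = 1 from by ring, one_smul]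
    have hJQsum : ∑ k, JQ k = P := by
      rw [hJQdef]
      rw [Finset.sum_add_distrib, hNBP, Finset.sum_const, Finset.card_univ,
        ← Nat.cast_smul_eq_nsmul ℂ, smul_smul, ← hκ'def,
        show κ' * ((1 - c') * κ'⁻¹) = 1 - c' from by field_simp,
        ← add_smul, show c' + (1 - c') = 1 from by ring, one_smul]
    have hRsum : ∑ x, R x = P := by
      rw [hRdef]
      rw [Finset.sum_add_distrib, ← Finset.sum_mul, ← Matrix.mul_sum, hC.2.2, hPNP, ht,
        Finset.sum_const, Finset.card_univ, ← Nat.cast_smul_eq_nsmul ℂ, smul_smul]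
      rw [show ((Fintype.card (S × S') : ℂ)) = κ * κ' from by
        rw [hκdef, hκ'def, Fintype.card_prod]; push_cast; ring]
      rw [show κ * κ' * ((lam : ℂ) * (1 - c) * (κ * κ')⁻¹) = (lam : ℂ) * (1 - c) from by
        field_simp]
      rw [← add_smul,
        show ((1 : ℂ) - lam) + (lam : ℂ) * c + (lam : ℂ) * (1 - c) = 1 from by ring, one_smul]
    have hmargJ : ∀ j, ∑ k, R (j, k) = (1 - lam) • A j + lam • JP j := by
      intro j
      rw [hRdef]
      simp only []
      rw [Finset.sum_add_distrib, ← Finset.sum_mul, ← Matrix.mul_sum, hCj j,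
        Finset.sum_const, Finset.card_univ, ← Nat.cast_smul_eq_nsmul ℂ, smul_smul, ← hκ'def]
      rw [mul_add, add_mul, conj_smul_mix, conj_smul_mix, hPA j]
      rw [hJPdef]
      simp only []
      rw [smul_add, real_smul_mat lam (((1 - c) * κ⁻¹) • P), smul_smul]
      rw [show κ' * ((lam : ℂ) * (1 - c) * (κ * κ')⁻¹) = (lam : ℂ) * ((1 - c) * κ⁻¹) from by
        field_simp]
      rw [add_assoc]
    have hmargK : ∀ k, ∑ j, R (j, k) = (1 - lam) • B k + lam • JQ k := by
      intro k
      rw [hRdef]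
      simp only []
      rw [Finset.sum_add_distrib, ← Finset.sum_mul, ← Matrix.mul_sum, hCk k,
        Finset.sum_const, Finset.card_univ, ← Nat.cast_smul_eq_nsmul ℂ, smul_smul, ← hκdef]
      rw [mul_add, add_mul, conj_smul_mix, conj_smul_mix, hPB k]
      rw [hJQdef]
      simp only []
      rw [smul_add, real_smul_mat lam (((1 - c') * κ'⁻¹) • P), smul_smul]
      rw [show κ * ((lam : ℂ) * (1 - c) * (κ * κ')⁻¹) = (lam : ℂ) * ((1 - c') * κ'⁻¹) from by
        rw [show (lam : ℂ) * (1 - c) = (lam : ℂ) * (1 - c') from hlamc]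
        field_simp]
      rw [add_assoc]
    exact ⟨JP, JQ, ⟨hJPpsd, hJPsum⟩, ⟨hJQpsd, hJQsum⟩, R, ⟨hRpsd, hRsum⟩, hmargJ, hmargK⟩
  · rintro ⟨JP, JQ, hJP, hJQ, R, hR, hRj, hRk⟩
    exact ⟨JP, JQ, ρ, ρ, ⟨hρd, hJP.1, hJP.2⟩, ⟨hρd, hJQ.1, hJQ.2⟩,
      R, ρ, ⟨hρd, hR.1, hR.2⟩, hRj, hRk⟩

end Stmt16Main

/-- for testers with the same *pure* normalization state
`ρ = |ψ⟩⟨ψ|`, the tester robustness equals the POVM robustness of the canonical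
POVMs; moreover the tester operators factorize as `A_j = a_j ⊗ |ψ⟩⟨ψ|`,
`B_k = b_k ⊗ |ψ⟩⟨ψ|` for POVMs `a`, `b` on the output space. -/
theorem stmt16 {n m : Type*} [Fintype n] [DecidableEq n] [Fintype m] [DecidableEq m]
    {S S' : Type*} [Fintype S] [Fintype S']
    (A : S → Matrix (m × n) (m × n) ℂ) (B : S' → Matrix (m × n) (m × n) ℂ)
    (ψ : n → ℂ) (hψ : ∑ i, ‖ψ i‖ ^ 2 = 1)
    (hA : IsTester A (Matrix.vecMulVec ψ (star ψ)))
    (hB : IsTester B (Matrix.vecMulVec ψ (star ψ))) :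
    TesterRobustness A B =
      POVMRobustnessOn ((1 : Matrix m m ℂ) ⊗ₖ suppProj hA.1.1.1)
        (canonicalPOVM A hA.1.1.1) (canonicalPOVM B hA.1.1.1) ∧
    (∃ a : S → Matrix m m ℂ, IsPOVMOn 1 a ∧
      ∀ j, A j = a j ⊗ₖ Matrix.vecMulVec ψ (star ψ)) ∧
    (∃ b : S' → Matrix m m ℂ, IsPOVMOn 1 b ∧
      ∀ k, B k = b k ⊗ₖ Matrix.vecMulVec ψ (star ψ)) := by
  have hρ2 := rho_idem hψ
  have hinv : invSqrt hA.1.1.1 = Matrix.vecMulVec ψ (star ψ) := invSqrt_of_proj _ hρ2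
  have hsupp : suppProj hA.1.1.1 = Matrix.vecMulVec ψ (star ψ) := suppProj_of_proj _ hρ2
  have hPA := tester_support hψ hA
  have hPB := tester_support hψ hB
  have hcanA : canonicalPOVM A hA.1.1.1 = A := by
    funext j
    show ((1 : Matrix m m ℂ) ⊗ₖ invSqrt hA.1.1.1) * A j *
      ((1 : Matrix m m ℂ) ⊗ₖ invSqrt hA.1.1.1) = A j
    rw [hinv]
    exact hPA j
  have hcanB : canonicalPOVM B hA.1.1.1 = B := by
    funext k
    show ((1 : Matrix m m ℂ) ⊗ₖ invSqrt hA.1.1.1) * B k *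
      ((1 : Matrix m m ℂ) ⊗ₖ invSqrt hA.1.1.1) = B k
    rw [hinv]
    exact hPB k
  refine ⟨?_, ?_, ?_⟩
  · rw [hcanA, hcanB, hsupp]
    unfold TesterRobustness POVMRobustnessOn
    congr 1
    ext lam
    simp only [Set.mem_setOf_eq, Set.mem_Icc]
    constructor
    · rintro ⟨⟨h0, h1⟩, h2⟩
      exact ⟨⟨h0, h1⟩, (lambda_iff A B ψ hψ hA hB lam h0).1 h2⟩
    · rintro ⟨⟨h0, h1⟩, h2⟩
      exact ⟨⟨h0, h1⟩, (lambda_iff A B ψ hψ hA hB lam h0).2 h2⟩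
  · refine ⟨fun j => (psiEmbed (m := m) ψ)ᴴ * A j * psiEmbed (m := m) ψ,
      ⟨fun j => (hA.2.1 j).conjTranspose_mul_mul_same _, ?_⟩, fun j => ?_⟩
    · show ∑ j, (psiEmbed (m := m) ψ)ᴴ * A j * psiEmbed (m := m) ψ = 1
      rw [← Matrix.sum_mul, ← Matrix.mul_sum, hA.2.2, ← psiEmbed_mul_conjTranspose,
        show (psiEmbed (m := m) ψ)ᴴ * ((psiEmbed (m := m) ψ : Matrix (m × n) m ℂ) * (psiEmbed (m := m) ψ)ᴴ) * psiEmbed (m := m) ψ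
          = ((psiEmbed (m := m) ψ)ᴴ * psiEmbed (m := m) ψ) * ((psiEmbed (m := m) ψ)ᴴ * psiEmbed (m := m) ψ) from by
          simp only [Matrix.mul_assoc],
        conjTranspose_mul_psiEmbed (m := m) ψ hψ, one_mul]
    · exact ((conj_kron_eq ψ (A j)).symm.trans (hPA j)).symm
  · refine ⟨fun k => (psiEmbed (m := m) ψ)ᴴ * B k * psiEmbed (m := m) ψ,
      ⟨fun k => (hB.2.1 k).conjTranspose_mul_mul_same _, ?_⟩, fun k => ?_⟩
    · show ∑ k, (psiEmbed (m := m) ψ)ᴴ * B k * psiEmbed (m := m) ψ = 1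
      rw [← Matrix.sum_mul, ← Matrix.mul_sum, hB.2.2, ← psiEmbed_mul_conjTranspose,
        show (psiEmbed (m := m) ψ)ᴴ * ((psiEmbed (m := m) ψ : Matrix (m × n) m ℂ) * (psiEmbed (m := m) ψ)ᴴ) * psiEmbed (m := m) ψ
          = ((psiEmbed (m := m) ψ)ᴴ * psiEmbed (m := m) ψ) * ((psiEmbed (m := m) ψ)ᴴ * psiEmbed (m := m) ψ) from by
          simp only [Matrix.mul_assoc],
        conjTranspose_mul_psiEmbed (m := m) ψ hψ, one_mul]
    · exact ((conj_kron_eq ψ (B k)).symm.trans (hPB k)).symm
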